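/- In an all-pay Richman bidding game against any pure (deterministic) Max strategy, Min has a counter-strategy that loses at most ⌈B₀/C₀⌉ + 1 biddings, where B₀ and C₀ > 0 are the initial budgets of Max and Min. Specifically: define Min's strategy by matching Max's bid b if b ≤ C (her current budget) and bidding 0 otherwise; ties go to Min. Then along any play, the number of biddings Min loses is at most ⌈B₀/C₀⌉ + 1. -/
import Mathlib


open scoped Classical

/-- Against any pure Max strategy in an all-pay Richman bidding game, Min's
matching strategy (match Max's bid `b` when `b ≤ C`, else bid `0`; ties to Min)
loses at most `⌈B₀/C₀⌉ + 1` biddings. -/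
theorem richman_pure_useless (B C b : ℕ → ℝ) (B₀ C₀ : ℝ)
    (hB0 : B 0 = B₀) (hC0 : C 0 = C₀) (hB₀ : 0 ≤ B₀) (hC₀ : 0 < C₀)
    (hlegal : ∀ n, 0 ≤ b n ∧ b n ≤ B n)
    (hupd : ∀ n, (b n ≤ C n → B (n + 1) = B n ∧ C (n + 1) = C n) ∧
      (C n < b n → B (n + 1) = B n - b n ∧ C (n + 1) = C n + b n)) :
    ∀ n, ((Finset.range n).filter (fun i => C i < b i)).card ≤ ⌈B₀ / C₀⌉₊ + 1 := by
  have key : ∀ n, C₀ ≤ C n ∧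
      B n + (((Finset.range n).filter (fun i => C i < b i)).card : ℝ) * C₀ ≤ B₀ := by
    intro n
    induction n with
    | zero => simp [hB0, hC0]
    | succ n ih =>
      obtain ⟨hCn, hBn⟩ := ih
      rcases le_or_gt (b n) (C n) with h | h
      · obtain ⟨hB', hC'⟩ := (hupd n).1 h
        have : (Finset.range (n+1)).filter (fun i => C i < b i)
            = (Finset.range n).filter (fun i => C i < b i) := by
          rw [Finset.range_add_one, Finset.filter_insert, if_neg (not_lt.2 h)]
        rw [this, hB', hC']
        exact ⟨hCn, hBn⟩
      · obtain ⟨hB', hC'⟩ := (hupd n).2 h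
        have hcard : (Finset.range (n+1)).filter (fun i => C i < b i)
            = insert n ((Finset.range n).filter (fun i => C i < b i)) := by
          rw [Finset.range_add_one, Finset.filter_insert, if_pos h]
        have hnmem : n ∉ (Finset.range n).filter (fun i => C i < b i) := by
          simp
        constructor
        · rw [hC']
          have := (hlegal n).1
          linarith
        · rw [hcard, Finset.card_insert_of_notMem hnmem, hB']
          push_cast
          nlinarith
  intro n
  obtain ⟨hCn, hBn⟩ := key n
  set k := ((Finset.range n).filter (fun i => C i < b i)).card with hk
  have hBnn : 0 ≤ B n := by
    cases n with
    | zero => rw [hB0]; exact hB₀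
    | succ m =>
      rcases le_or_gt (b m) (C m) with h | h
      · rw [((hupd m).1 h).1]
        have h1 := (hlegal m).2
        have h0 := (hlegal m).1
        linarith
      · rw [((hupd m).2 h).1]
        have h1 := (hlegal m).2
        linarith
  have hkle : (k : ℝ) ≤ B₀ / C₀ := by
    rw [le_div_iff₀ hC₀]
    linarith
  have : k ≤ ⌈B₀ / C₀⌉₊ := by
    exact_mod_cast hkle.trans (Nat.le_ceil _)
  omega
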